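/- Let φ ∈ ℝ[z_1,…,z_h] be a homogeneous polynomial of degree 3. For z ∈ ℂ^h with y = Im z ∈ ℝ^h, the following identities hold: (a) ⟨ω(z), conj(ω(z))⟩ = 8√−1·φ(y); (b) ⟨ω_i(z), conj(ω_j(z))⟩ = 2√−1·(∂²φ/∂z_i∂z_j)(y) for all i, j ∈ {1,…,h}; and (c) ⟨ω_i(z), conj(ω(z))⟩ = 4·(∂φ/∂z_i)(y) for all i ∈ {1,…,h}. -/

import Mathlib

open MvPolynomial

/-- The symplectic form on `ℂ^{2h+2}`, where a vector is recorded as the pair of its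
`e_0, e_1, …, e_h`-coordinates and its `f_0, f_1, …, f_h`-coordinates:
`⟨e_i, e_j⟩ = ⟨f_i, f_j⟩ = 0` and `⟨e_i, f_j⟩ = δ_{ij}`. -/
noncomputable def symp {h : ℕ} (x y : (Fin (h+1) → ℂ) × (Fin (h+1) → ℂ)) : ℂ :=
  ∑ j, (x.1 j * y.2 j - x.2 j * y.1 j)

/-- Coordinatewise complex conjugation with respect to the real basis `e_i, f_i`. -/
noncomputable def conjV {h : ℕ} (x : (Fin (h+1) → ℂ) × (Fin (h+1) → ℂ)) :
    (Fin (h+1) → ℂ) × (Fin (h+1) → ℂ) :=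
  (fun j => starRingEnd ℂ (x.1 j), fun j => starRingEnd ℂ (x.2 j))

/-- `ω(z) = −φ(z)·e_0 + Σᵢ (∂φ/∂z_i)(z)·e_i + Σᵢ z_i·f_i + f_0` for a real cubic `φ`. -/
noncomputable def omR {h : ℕ} (φ : MvPolynomial (Fin h) ℝ) (z : Fin h → ℂ) :
    (Fin (h+1) → ℂ) × (Fin (h+1) → ℂ) :=
  (Fin.cons (-(aeval z φ)) (fun i => aeval z (pderiv i φ)), Fin.cons 1 z)

/-- `ω_i(z) = ∂ω/∂z_i = −(∂φ/∂z_i)(z)·e_0 + Σⱼ (∂²φ/∂z_i∂z_j)(z)·e_j + f_i`. -/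
noncomputable def omRd {h : ℕ} (φ : MvPolynomial (Fin h) ℝ) (i : Fin h)
    (z : Fin h → ℂ) : (Fin (h+1) → ℂ) × (Fin (h+1) → ℂ) :=
  (Fin.cons (-(aeval z (pderiv i φ))) (fun j => aeval z (pderiv i (pderiv j φ))),
    Fin.cons 0 (Pi.single i 1))

section Aux

variable {h : ℕ}

lemma cubic_mem_span (φ : MvPolynomial (Fin h) ℝ) (hφ : φ.IsHomogeneous 3) :
    φ ∈ Submodule.span ℝ {m : MvPolynomial (Fin h) ℝ | ∃ p q r, m = X p * X q * X r} := by
  classical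
  nth_rewrite 1 [φ.as_sum]
  refine Submodule.sum_mem _ fun d hd => ?_
  have hcard : Multiset.card (Finsupp.toMultiset d) = 3 := by
    rw [Finsupp.card_toMultiset]
    have : d.degree = 3 := by
      rw [Finsupp.degree_eq_weight_one]; exact hφ (mem_support_iff.mp hd)
    simpa [Finsupp.degree_apply, Finsupp.sum] using this
  obtain ⟨p, q, r, hpqr⟩ := Multiset.card_eq_three.mp hcard
  have hd' : d = Finsupp.single p 1 + (Finsupp.single q 1 + Finsupp.single r 1) := by
    have := congrArg Multiset.toFinsupp hpqr
    rw [Finsupp.toMultiset_toFinsupp] at this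
    rw [this]
    simp [Multiset.insert_eq_cons, ← Multiset.singleton_add, Multiset.toFinsupp_add]
  have hmono : (monomial d) (coeff d φ) = (coeff d φ) • (X p * X q * X r) := by
    rw [hd', monomial_single_add, monomial_single_add, ← C_mul_X_pow_eq_monomial]
    rw [smul_eq_C_mul]; ring
  rw [hmono]
  exact Submodule.smul_mem _ _ (Submodule.subset_span ⟨p, q, r, rfl⟩)

noncomputable def aevalL (z : Fin h → ℂ) : MvPolynomial (Fin h) ℝ →ₗ[ℝ] ℂ :=
  (aeval z).toLinearMap

noncomputable def conjL : ℂ →ₗ[ℝ] ℂ := Complex.conjAe.toLinearMap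

noncomputable def pdL (i : Fin h) : MvPolynomial (Fin h) ℝ →ₗ[ℝ] MvPolynomial (Fin h) ℝ :=
  (pderiv i).toLinearMap

noncomputable def G1 (z : Fin h → ℂ) : MvPolynomial (Fin h) ℝ →ₗ[ℝ] ℂ :=
  conjL ∘ₗ aevalL z - aevalL z
    + ∑ i, ((starRingEnd ℂ (z i)) • (aevalL z ∘ₗ pdL i)
        - (z i) • (conjL ∘ₗ aevalL z ∘ₗ pdL i))

noncomputable def G2 (z : Fin h → ℂ) (i j : Fin h) : MvPolynomial (Fin h) ℝ →ₗ[ℝ] ℂ :=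
  aevalL z ∘ₗ pdL i ∘ₗ pdL j - conjL ∘ₗ aevalL z ∘ₗ pdL j ∘ₗ pdL i

noncomputable def G3 (z : Fin h → ℂ) (i : Fin h) : MvPolynomial (Fin h) ℝ →ₗ[ℝ] ℂ :=
  -(aevalL z ∘ₗ pdL i) - conjL ∘ₗ aevalL z ∘ₗ pdL i
    + ∑ m, (starRingEnd ℂ (z m)) • (aevalL z ∘ₗ pdL i ∘ₗ pdL m)

lemma G1_apply (z : Fin h → ℂ) (φ : MvPolynomial (Fin h) ℝ) :
    G1 z φ = starRingEnd ℂ (aeval z φ) - aeval z φ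
      + ∑ i, (starRingEnd ℂ (z i) * aeval z (pderiv i φ)
          - z i * starRingEnd ℂ (aeval z (pderiv i φ))) := by
  simp [G1, aevalL, conjL, pdL, LinearMap.sum_apply, smul_eq_mul]

lemma G2_apply (z : Fin h → ℂ) (i j : Fin h) (φ : MvPolynomial (Fin h) ℝ) :
    G2 z i j φ = aeval z (pderiv i (pderiv j φ))
      - starRingEnd ℂ (aeval z (pderiv j (pderiv i φ))) := by
  simp [G2, aevalL, conjL, pdL]

lemma G3_apply (z : Fin h → ℂ) (i : Fin h) (φ : MvPolynomial (Fin h) ℝ) :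
    G3 z i φ = -(aeval z (pderiv i φ)) - starRingEnd ℂ (aeval z (pderiv i φ))
      + ∑ m, starRingEnd ℂ (z m) * aeval z (pderiv i (pderiv m φ)) := by
  simp [G3, aevalL, conjL, pdL, LinearMap.sum_apply, smul_eq_mul]

lemma symp_omR (z : Fin h → ℂ) (φ : MvPolynomial (Fin h) ℝ) :
    symp (omR φ z) (conjV (omR φ z)) = G1 z φ := by
  rw [G1_apply]
  simp only [symp, omR, conjV, Fin.sum_univ_succ, Fin.cons_zero, Fin.cons_succ, map_one,
    map_neg]
  exact congrArg₂ (· + ·) (by ring) (Finset.sum_congr rfl fun x _ => by ring)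

lemma symp_omRd_omRd (z : Fin h → ℂ) (i j : Fin h) (φ : MvPolynomial (Fin h) ℝ) :
    symp (omRd φ i z) (conjV (omRd φ j z)) = G2 z i j φ := by
  rw [G2_apply]
  classical
  simp only [symp, omRd, conjV, Fin.sum_univ_succ, Fin.cons_zero, Fin.cons_succ, map_zero,
    map_neg, Pi.single_apply, apply_ite (starRingEnd ℂ), map_one, mul_ite, ite_mul,
    mul_one, mul_zero, zero_mul, one_mul]
  rw [Finset.sum_sub_distrib]
  simp [Finset.sum_ite_eq']

lemma symp_omRd_omR (z : Fin h → ℂ) (i : Fin h) (φ : MvPolynomial (Fin h) ℝ) :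
    symp (omRd φ i z) (conjV (omR φ z)) = G3 z i φ := by
  rw [G3_apply]
  classical
  simp only [symp, omRd, omR, conjV, Fin.sum_univ_succ, Fin.cons_zero, Fin.cons_succ,
    map_zero, map_neg, map_one, Pi.single_apply, mul_ite, ite_mul, mul_one, mul_zero,
    zero_mul, one_mul]
  rw [Finset.sum_sub_distrib]
  simp only [Finset.sum_ite_eq', Finset.mem_univ, if_true]
  rw [Finset.sum_congr rfl (fun m _ => mul_comm ((aeval z) ((pderiv i) ((pderiv m) φ))) (starRingEnd ℂ (z m)))]
  ring

lemma hD_lemma (p q r : Fin h) (i : Fin h) :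
    (pderiv i) (X p * X q * X r : MvPolynomial (Fin h) ℝ)
      = (if p = i then X q * X r else 0) + (if q = i then X p * X r else 0)
        + (if r = i then X p * X q else 0) := by
  classical
  simp only [pderiv_mul, pderiv_X, Pi.single_apply]
  split_ifs <;> simp <;> ring

lemma hE_lemma (p q r : Fin h) (i m : Fin h) :
    (pderiv i) ((pderiv m) (X p * X q * X r : MvPolynomial (Fin h) ℝ))
      = ((if p = m then ((if q = i then X r else 0) + (if r = i then X q else 0)) else 0)
        + (if q = m then ((if p = i then X r else 0) + (if r = i then X p else 0)) else 0)
        + (if r = m then ((if p = i then X q else 0) + (if q = i then X p else 0)) else 0)) := by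
  classical
  rw [hD_lemma]
  simp only [map_add, apply_ite (pderiv i), map_zero, hD_lemma, pderiv_mul, pderiv_X,
    Pi.single_apply]
  split_ifs <;> simp

lemma cast_eval (y : Fin h → ℝ) (ψ : MvPolynomial (Fin h) ℝ) :
    ((eval y ψ : ℝ) : ℂ) = aeval (fun i => ((y i : ℝ) : ℂ)) ψ := by
  induction ψ using MvPolynomial.induction_on with
  | C a => simp
  | add pp qq hp hq => simp [hp, hq]
  | mul_X pp i hp => simp [hp]

lemma base1 (z : Fin h → ℂ) (y : Fin h → ℝ) (hy : ∀ i, y i = (z i).im) (p q r : Fin h) :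
    G1 z (X p * X q * X r) = 8 * Complex.I * ((eval y (X p * X q * X r) : ℝ) : ℂ) := by
  classical
  rw [G1_apply]
  simp only [hD_lemma, map_add, map_mul, aeval_X, apply_ite (aeval z), map_zero,
    apply_ite (starRingEnd ℂ), mul_add, mul_ite, mul_zero, Finset.sum_add_distrib,
    Finset.sum_sub_distrib, Finset.sum_ite_eq, Finset.sum_ite_eq', Finset.mem_univ, if_true,
    eval_mul, eval_X]
  push_cast
  simp only [hy]
  apply Complex.ext <;> simp <;> ring

lemma hD_aeval (z : Fin h → ℂ) (p q r i : Fin h) :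
    aeval z ((pderiv i) (X p * X q * X r : MvPolynomial (Fin h) ℝ))
      = (if p = i then z q * z r else 0) + (if q = i then z p * z r else 0)
        + (if r = i then z p * z q else 0) := by
  classical
  rw [hD_lemma]
  simp only [map_add, apply_ite (aeval z), map_zero, map_mul, aeval_X]

lemma hD_eval (y : Fin h → ℝ) (p q r i : Fin h) :
    eval y ((pderiv i) (X p * X q * X r : MvPolynomial (Fin h) ℝ))
      = (if p = i then y q * y r else 0) + (if q = i then y p * y r else 0)
        + (if r = i then y p * y q else 0) := by
  classical
  rw [hD_lemma]
  simp only [eval_add, apply_ite (eval y), map_zero, eval_mul, eval_X]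

lemma hE_aeval (z : Fin h → ℂ) (p q r i m : Fin h) :
    aeval z ((pderiv i) ((pderiv m) (X p * X q * X r : MvPolynomial (Fin h) ℝ)))
      = ((if p = m then ((if q = i then z r else 0) + (if r = i then z q else 0)) else 0)
        + (if q = m then ((if p = i then z r else 0) + (if r = i then z p else 0)) else 0)
        + (if r = m then ((if p = i then z q else 0) + (if q = i then z p else 0)) else 0)) := by
  classical
  rw [hE_lemma]
  simp only [map_add, apply_ite (aeval z), map_zero, aeval_X]

lemma hE_eval (y : Fin h → ℝ) (p q r i m : Fin h) :
    eval y ((pderiv i) ((pderiv m) (X p * X q * X r : MvPolynomial (Fin h) ℝ)))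
      = ((if p = m then ((if q = i then y r else 0) + (if r = i then y q else 0)) else 0)
        + (if q = m then ((if p = i then y r else 0) + (if r = i then y p else 0)) else 0)
        + (if r = m then ((if p = i then y q else 0) + (if q = i then y p else 0)) else 0)) := by
  classical
  rw [hE_lemma]
  simp only [eval_add, apply_ite (eval y), map_zero, eval_X]

set_option maxHeartbeats 1000000 in
lemma base2 (z : Fin h → ℂ) (y : Fin h → ℝ) (hy : ∀ i, y i = (z i).im) (i j p q r : Fin h) :
    G2 z i j (X p * X q * X r)
      = 2 * Complex.I * ((eval y (pderiv i (pderiv j (X p * X q * X r))) : ℝ) : ℂ) := by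
  classical
  rw [G2_apply]
  simp only [hE_aeval, hE_eval, map_add, apply_ite (starRingEnd ℂ), map_zero]
  split_ifs <;> subst_vars <;>
    first
      | (exfalso; simp_all; done)
      | (push_cast; apply Complex.ext <;> simp [hy] <;> ring)

set_option maxHeartbeats 1000000 in
lemma base3 (z : Fin h → ℂ) (y : Fin h → ℝ) (hy : ∀ i, y i = (z i).im) (i p q r : Fin h) :
    G3 z i (X p * X q * X r)
      = 4 * ((eval y (pderiv i (X p * X q * X r)) : ℝ) : ℂ) := by
  classical
  rw [G3_apply]
  simp only [hD_aeval, hD_eval, hE_aeval, map_add, apply_ite (starRingEnd ℂ), map_zero,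
    map_mul, mul_add, mul_ite, mul_zero, Finset.sum_add_distrib, Finset.sum_ite_eq,
    Finset.mem_univ, if_true]
  split_ifs <;> subst_vars <;>
    first
      | (exfalso; simp_all; done)
      | (push_cast; apply Complex.ext <;> simp [hy] <;> ring)

end Aux


/-- The basic real-structure identities for a real homogeneous cubic `φ`, writing
`y = Im z`:
`⟨ω(z), conj ω(z)⟩ = 8√−1·φ(y)`,
`⟨ω_i(z), conj ω_j(z)⟩ = 2√−1·(∂²φ/∂z_i∂z_j)(y)`,
`⟨ω_i(z), conj ω(z)⟩ = 4·(∂φ/∂z_i)(y)`. -/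
theorem stmt12 {h : ℕ} (hh : 1 ≤ h) (φ : MvPolynomial (Fin h) ℝ)
    (hφ : φ.IsHomogeneous 3) (z : Fin h → ℂ) (y : Fin h → ℝ)
    (hy : ∀ i, y i = (z i).im) :
    (symp (omR φ z) (conjV (omR φ z)) = 8 * Complex.I * (eval y φ : ℝ)) ∧
    (∀ i j : Fin h, symp (omRd φ i z) (conjV (omRd φ j z))
        = 2 * Complex.I * (eval y (pderiv i (pderiv j φ)) : ℝ)) ∧
    (∀ i : Fin h, symp (omRd φ i z) (conjV (omR φ z))
        = 4 * (eval y (pderiv i φ) : ℝ)) := by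
  classical
  have hspan := cubic_mem_span φ hφ
  set Ey : MvPolynomial (Fin h) ℝ →ₗ[ℝ] ℂ := aevalL (fun k => ((y k : ℝ) : ℂ)) with hEy
  have hEyφ : ∀ ψ : MvPolynomial (Fin h) ℝ, Ey ψ = ((eval y ψ : ℝ) : ℂ) := by
    intro ψ; rw [hEy]; simp only [aevalL, AlgHom.toLinearMap_apply]; rw [cast_eval]
  refine ⟨?_, fun i j => ?_, fun i => ?_⟩
  · rw [symp_omR]
    have hbase : Set.EqOn ⇑(G1 z)
        ⇑((8 * Complex.I) • Ey)
        {m : MvPolynomial (Fin h) ℝ | ∃ p q r, m = X p * X q * X r} := by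
      rintro m ⟨p, q, r, rfl⟩
      simp only [LinearMap.smul_apply, smul_eq_mul, hEyφ]
      exact base1 z y hy p q r
    have := LinearMap.eqOn_span hbase hspan
    rw [this]
    simp only [LinearMap.smul_apply, smul_eq_mul, hEyφ]
  · rw [symp_omRd_omRd]
    have hbase : Set.EqOn ⇑(G2 z i j)
        ⇑((2 * Complex.I) • (Ey ∘ₗ pdL i ∘ₗ pdL j))
        {m : MvPolynomial (Fin h) ℝ | ∃ p q r, m = X p * X q * X r} := by
      rintro m ⟨p, q, r, rfl⟩
      simp only [LinearMap.smul_apply, LinearMap.comp_apply, smul_eq_mul, hEyφ, pdL]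
      exact base2 z y hy i j p q r
    have := LinearMap.eqOn_span hbase hspan
    rw [this]
    simp only [LinearMap.smul_apply, LinearMap.comp_apply, smul_eq_mul, hEyφ, pdL]
    rfl
  · rw [symp_omRd_omR]
    have hbase : Set.EqOn ⇑(G3 z i)
        ⇑((4 : ℂ) • (Ey ∘ₗ pdL i))
        {m : MvPolynomial (Fin h) ℝ | ∃ p q r, m = X p * X q * X r} := by
      rintro m ⟨p, q, r, rfl⟩
      simp only [LinearMap.smul_apply, LinearMap.comp_apply, smul_eq_mul, hEyφ, pdL]
      exact base3 z y hy i p q r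
    have := LinearMap.eqOn_span hbase hspan
    rw [this]
    simp only [LinearMap.smul_apply, LinearMap.comp_apply, smul_eq_mul, hEyφ, pdL]
    rfl
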